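/- The Hanoi map (x,y) ↦ (x - 2(x²-x-y²)y²/((x-y-1)(x²+y-y²-1)), (x+y-1)y²/((x-y-1)(x²+y-y²-1))) is semiconjugated by ψ(x,y) = (x² - 1 - xy - 2y²)/y to the one-dimensional map β(x) = x² - x - 3: if (x',y') is the image of (x,y) under the Hanoi map (with all denominators nonzero), then ψ(x',y') = β(ψ(x,y)). -/
import Mathlib

/-- The Hanoi map is semiconjugated by ψ(x,y) = (x²-1-xy-2y²)/y to β(x) = x²-x-3. -/
theorem hanoi_semiconjugacy (x y x' y' : ℝ)
    (hy : y ≠ 0)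
    (hd1 : x - y - 1 ≠ 0) (hd2 : x ^ 2 + y - y ^ 2 - 1 ≠ 0)
    (hx' : x' = x - 2 * (x ^ 2 - x - y ^ 2) * y ^ 2
        / ((x - y - 1) * (x ^ 2 + y - y ^ 2 - 1)))
    (hy' : y' = (x + y - 1) * y ^ 2
        / ((x - y - 1) * (x ^ 2 + y - y ^ 2 - 1)))
    (hy'0 : y' ≠ 0) :
    (x' ^ 2 - 1 - x' * y' - 2 * y' ^ 2) / y'
      = ((x ^ 2 - 1 - x * y - 2 * y ^ 2) / y) ^ 2
        - (x ^ 2 - 1 - x * y - 2 * y ^ 2) / y - 3 := by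
  have hxy : x + y - 1 ≠ 0 := by
    intro h
    apply hy'0
    rw [hy', h]; ring
  subst hx' hy'
  field_simp
  ring
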